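/- arXiv:2605.13347 — 4 statements merged into one kernel-verified Lean document; each statement's English description precedes it below -/
import Mathlib

section
/- Let N ≥ 1 and s ∈ (0, min(1, N/2)). There exists a constant C > 0 depending only on N and s such that for every c ∈ (0, 1/3), if λ_c > 0 is chosen so that the function Ψ(x) = λ_c [ (1 + |x|²/c²)^{-(N-2s)/2} - (1 + 1/c²)^{-(N-2s)/2} ] has ‖Ψ‖_{L^{2N/(N-2s)}(B_1(0))} = 1, then C^{-1} c^{-(N-2s)/2} ≤ λ_c ≤ C c^{-(N-2s)/2}. -/
open Real MeasureTheory

/-- Auxiliary real-power computation: `((1+u)^2/2)^(-n) = 2^n * (1+u)^(-(2n))`. -/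
lemma aux_rpow_half (u n : ℝ) (hu : 0 ≤ u) :
    ((1 + u) ^ 2 / 2) ^ (-n) = 2 ^ n * (1 + u) ^ (-(2 * n)) := by
  have h1 : (0:ℝ) ≤ (1 + u) ^ 2 := by positivity
  rw [Real.div_rpow h1 (by norm_num), Real.rpow_neg (by norm_num : (0:ℝ) ≤ 2),
    div_eq_mul_inv, inv_inv, mul_comm]
  congr 1
  rw [← Real.rpow_natCast (1 + u) 2, ← Real.rpow_mul (by positivity)]
  congr 1
  push_cast
  ring

set_option maxHeartbeats 2000000 in
theorem normalization_constant_asymptotics (N : ℕ) (hN : 1 ≤ N) (s : ℝ)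
    (hs0 : 0 < s) (hs1 : s < min 1 ((N : ℝ) / 2)) :
    ∃ C : ℝ, 0 < C ∧
      ∀ c : ℝ, 0 < c → c < 1 / 3 → ∀ lam : ℝ, 0 < lam →
        (∫ x in Metric.ball (0 : EuclideanSpace ℝ (Fin N)) 1,
            |lam * ((1 + ‖x‖ ^ 2 / c ^ 2) ^ (-(((N : ℝ) - 2 * s)) / 2) -
              (1 + 1 / c ^ 2) ^ (-(((N : ℝ) - 2 * s)) / 2))| ^
              (2 * (N : ℝ) / ((N : ℝ) - 2 * s))) ^ (((N : ℝ) - 2 * s) / (2 * (N : ℝ))) = 1 →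
        C⁻¹ * c ^ (-(((N : ℝ) - 2 * s)) / 2) ≤ lam ∧
          lam ≤ C * c ^ (-(((N : ℝ) - 2 * s)) / 2) := by
  classical
  have hNpos : 0 < (N:ℝ) := by exact_mod_cast hN
  have hNs : 0 < (N:ℝ) - 2 * s := by
    have := (lt_min_iff.mp hs1).2; linarith
  set a : ℝ := ((N:ℝ) - 2 * s) / 2 with ha
  set p : ℝ := 2 * (N:ℝ) / ((N:ℝ) - 2 * s) with hp
  have ha0 : 0 < a := by positivity
  have hp0 : 0 < p := by positivity
  have hap : a * p = (N:ℝ) := by rw [ha, hp]; field_simp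
  have hNp : (N:ℝ) * p⁻¹ = a := by
    rw [hp, ha]; field_simp
  have hfin : Module.finrank ℝ (EuclideanSpace ℝ (Fin N)) = N := finrank_euclideanSpace_fin
  have hnontriv : Nontrivial (EuclideanSpace ℝ (Fin N)) := by
    have : 0 < Module.finrank ℝ (EuclideanSpace ℝ (Fin N)) := by rw [hfin]; exact hN
    exact Module.nontrivial_of_finrank_pos this
  -- basic constants
  set vol1 : ℝ := (volume (Metric.ball (0:(EuclideanSpace ℝ (Fin N))) 1)).toReal with hvol1def
  have hvol1 : 0 < vol1 :=
    ENNReal.toReal_pos (Metric.measure_ball_pos _ _ one_pos).ne' measure_ball_lt_top.ne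
  set δ : ℝ := (2:ℝ) ^ (-a) - (10:ℝ) ^ (-a) with hδdef
  have hδ : 0 < δ := by
    rw [hδdef, sub_pos, Real.rpow_neg (by norm_num : (0:ℝ) ≤ 2),
      Real.rpow_neg (by norm_num : (0:ℝ) ≤ 10)]
    apply inv_strictAnti₀ (by positivity)
    exact Real.rpow_lt_rpow (by norm_num) (by norm_num) ha0
  set m : ℝ := δ ^ p * vol1 with hmdef
  have hm : 0 < m := by positivity
  have hKint : Integrable (fun y : (EuclideanSpace ℝ (Fin N)) => (1 + ‖y‖) ^ (-(2 * (N:ℝ)))) volume := by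
    apply integrable_one_add_norm (μ := volume)
    rw [hfin]; linarith
  set K : ℝ := ∫ y : (EuclideanSpace ℝ (Fin N)), (1 + ‖y‖) ^ (-(2 * (N:ℝ))) with hKdef
  have hK0 : 0 ≤ K := integral_nonneg fun y => Real.rpow_nonneg (by positivity) _
  set M : ℝ := 2 ^ (N:ℝ) * K + 1 with hMdef
  have hM : 0 < M := by positivity
  refine ⟨max ((m⁻¹) ^ p⁻¹) (M ^ p⁻¹), lt_max_of_lt_right (by positivity), ?_⟩
  intro c hc hc3 lam hlam heq
  set C : ℝ := max ((m⁻¹) ^ p⁻¹) (M ^ p⁻¹) with hCdef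
  have hC : 0 < C := lt_max_of_lt_right (by positivity)
  -- the unnormalized profile
  set f : (EuclideanSpace ℝ (Fin N)) → ℝ := fun x => (1 + ‖x‖ ^ 2 / c ^ 2) ^ (-a) - (1 + 1 / c ^ 2) ^ (-a) with hfdef
  -- rewrite the hypothesis
  have hexp : -(((N : ℝ) - 2 * s)) / 2 = -a := by rw [neg_div, ha]
  have hpinv : (((N : ℝ) - 2 * s) / (2 * (N : ℝ))) = p⁻¹ := by
    rw [hp, inv_div]
  rw [hexp, hpinv] at heq
  set I : ℝ := ∫ x in Metric.ball (0:(EuclideanSpace ℝ (Fin N))) 1, |f x| ^ p with hIdef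
  have hinteq : (∫ x in Metric.ball (0:(EuclideanSpace ℝ (Fin N))) 1,
      |lam * ((1 + ‖x‖ ^ 2 / c ^ 2) ^ (-a) - (1 + 1 / c ^ 2) ^ (-a))| ^ p) = lam ^ p * I := by
    rw [hIdef, ← integral_const_mul]
    apply setIntegral_congr_fun measurableSet_ball
    intro x _
    show |lam * ((1 + ‖x‖ ^ 2 / c ^ 2) ^ (-a) - (1 + 1 / c ^ 2) ^ (-a))| ^ p
        = lam ^ p * |f x| ^ p
    rw [abs_mul, abs_of_pos hlam, Real.mul_rpow hlam.le (abs_nonneg _)]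
  have heq2 : (lam ^ p * I) ^ p⁻¹ = 1 := by rw [← hinteq]; exact heq
  -- positivity of inner base
  have hbase : ∀ x : (EuclideanSpace ℝ (Fin N)), (0:ℝ) < 1 + ‖x‖ ^ 2 / c ^ 2 := fun x => by positivity
  -- f is nonnegative on the closed unit ball
  have hfnn : ∀ x : (EuclideanSpace ℝ (Fin N)), ‖x‖ ≤ 1 → 0 ≤ f x := by
    intro x hx
    apply sub_nonneg.mpr
    apply Real.rpow_le_rpow_of_nonpos (hbase x) _ (neg_nonpos.mpr ha0.le)
    have h2 : ‖x‖ ^ 2 ≤ 1 := by nlinarith [norm_nonneg x]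
    have : ‖x‖ ^ 2 / c ^ 2 ≤ 1 / c ^ 2 := by gcongr
    linarith
  -- continuity and integrability of |f|^p on the unit ball
  have hcont : Continuous fun x : (EuclideanSpace ℝ (Fin N)) => |f x| ^ p := by
    have h1 : Continuous f := by
      apply Continuous.sub _ continuous_const
      apply Continuous.rpow_const
      · fun_prop
      · intro x; exact Or.inl (hbase x).ne'
    exact h1.abs.rpow_const fun x => Or.inr hp0.le
  have hIntf : IntegrableOn (fun x : (EuclideanSpace ℝ (Fin N)) => |f x| ^ p) (Metric.ball (0:(EuclideanSpace ℝ (Fin N))) 1) volume :=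
    (hcont.continuousOn.integrableOn_compact (isCompact_closedBall (0:(EuclideanSpace ℝ (Fin N))) 1)).mono_set
      Metric.ball_subset_closedBall
  -- lower bound : m * c^N ≤ I
  have hballc : Metric.ball (0:(EuclideanSpace ℝ (Fin N))) c ⊆ Metric.ball (0:(EuclideanSpace ℝ (Fin N))) 1 :=
    Metric.ball_subset_ball (by linarith)
  have hvolc : (volume (Metric.ball (0:(EuclideanSpace ℝ (Fin N))) c)).toReal = c ^ N * vol1 := by
    rw [Measure.addHaar_ball (volume : Measure (EuclideanSpace ℝ (Fin N))) 0 hc.le, hfin, ENNReal.toReal_mul,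
      ENNReal.toReal_ofReal (by positivity)]
  have hlow : m * c ^ (N:ℝ) ≤ I := by
    have hstep1 : ∫ x in Metric.ball (0:(EuclideanSpace ℝ (Fin N))) c, (δ ^ p : ℝ) ≤
        ∫ x in Metric.ball (0:(EuclideanSpace ℝ (Fin N))) c, |f x| ^ p := by
      apply setIntegral_mono_on
      · exact integrableOn_const measure_ball_lt_top.ne
      · exact hIntf.mono_set hballc
      · exact measurableSet_ball
      · intro x hx
        rw [Metric.mem_ball, dist_zero_right] at hx
        have hδf : δ ≤ f x := by
          have e1 : (2:ℝ) ^ (-a) ≤ (1 + ‖x‖ ^ 2 / c ^ 2) ^ (-a) := by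
            apply Real.rpow_le_rpow_of_nonpos (hbase x) _ (neg_nonpos.mpr ha0.le)
            have : ‖x‖ ^ 2 / c ^ 2 ≤ 1 := by
              rw [div_le_one (by positivity)]
              nlinarith [norm_nonneg x]
            linarith
          have e2 : (1 + 1 / c ^ 2) ^ (-a) ≤ (10:ℝ) ^ (-a) := by
            apply Real.rpow_le_rpow_of_nonpos (by norm_num) _ (neg_nonpos.mpr ha0.le)
            have h9 : (9:ℝ) ≤ 1 / c ^ 2 := by
              rw [le_div_iff₀ (by positivity)]
              nlinarith
            linarith
          rw [hfdef, hδdef]; linarith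
        calc δ ^ p ≤ (f x) ^ p := Real.rpow_le_rpow hδ.le hδf hp0.le
          _ = |f x| ^ p := by rw [abs_of_nonneg (hfnn x (le_of_lt (lt_of_lt_of_le hx (by linarith))))]
      -- done
    have hstep2 : ∫ x in Metric.ball (0:(EuclideanSpace ℝ (Fin N))) c, |f x| ^ p ≤ I := by
      apply setIntegral_mono_set hIntf
      · filter_upwards with x using Real.rpow_nonneg (abs_nonneg _) _
      · exact HasSubset.Subset.eventuallyLE hballc
    have hconst : ∫ x in Metric.ball (0:(EuclideanSpace ℝ (Fin N))) c, (δ ^ p : ℝ) = c ^ N * vol1 * δ ^ p := by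
      rw [setIntegral_const, measureReal_def, hvolc, smul_eq_mul]
    have : m * c ^ (N:ℝ) = c ^ N * vol1 * δ ^ p := by
      rw [hmdef, Real.rpow_natCast]; ring
    rw [this]
    calc c ^ N * vol1 * δ ^ p = ∫ x in Metric.ball (0:(EuclideanSpace ℝ (Fin N))) c, (δ ^ p : ℝ) := hconst.symm
      _ ≤ ∫ x in Metric.ball (0:(EuclideanSpace ℝ (Fin N))) c, |f x| ^ p := hstep1
      _ ≤ I := hstep2
  -- upper bound : I ≤ M * c^N
  set g : (EuclideanSpace ℝ (Fin N)) → ℝ := fun x => 2 ^ (N:ℝ) * (1 + ‖c⁻¹ • x‖) ^ (-(2 * (N:ℝ))) with hgdef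
  have hgint : Integrable g volume := by
    apply Integrable.const_mul
    exact hKint.comp_smul (inv_ne_zero hc.ne')
  have hgnn : ∀ x : (EuclideanSpace ℝ (Fin N)), 0 ≤ g x := fun x => by
    apply mul_nonneg (by positivity) (Real.rpow_nonneg (by positivity) _)
  have hnorm : ∀ x : (EuclideanSpace ℝ (Fin N)), ‖c⁻¹ • x‖ = ‖x‖ / c := by
    intro x
    rw [norm_smul, Real.norm_eq_abs, abs_of_pos (inv_pos.mpr hc), inv_mul_eq_div]
  have hptwise : ∀ x ∈ Metric.ball (0:(EuclideanSpace ℝ (Fin N))) 1, |f x| ^ p ≤ g x := by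
    intro x hx
    rw [Metric.mem_ball, dist_zero_right] at hx
    set u : ℝ := ‖x‖ / c with hudef
    have hu : 0 ≤ u := by positivity
    have hx2 : ‖x‖ ^ 2 / c ^ 2 = u ^ 2 := by rw [hudef, div_pow]
    have h2 : f x ≤ (1 + u ^ 2) ^ (-a) := by
      simp only [hfdef]
      rw [hx2]
      have : (0:ℝ) ≤ (1 + 1 / c ^ 2) ^ (-a) := Real.rpow_nonneg (by positivity) _
      linarith
    have h3 : (1 + u ^ 2) ^ (-a) ≤ ((1 + u) ^ 2 / 2) ^ (-a) := by
      apply Real.rpow_le_rpow_of_nonpos (by positivity) _ (neg_nonpos.mpr ha0.le)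
      nlinarith [sq_nonneg (1 - u)]
    have h4 : |f x| ^ p ≤ (((1 + u) ^ 2 / 2) ^ (-a)) ^ p := by
      apply Real.rpow_le_rpow (abs_nonneg _) _ hp0.le
      rw [abs_of_nonneg (hfnn x hx.le)]
      exact h2.trans h3
    have h5 : (((1 + u) ^ 2 / 2) ^ (-a)) ^ p = ((1 + u) ^ 2 / 2) ^ (-(N:ℝ)) := by
      rw [← Real.rpow_mul (by positivity)]
      congr 1
      rw [← hap]; ring
    have h6 : ((1 + u) ^ 2 / 2) ^ (-(N:ℝ)) = 2 ^ (N:ℝ) * (1 + u) ^ (-(2 * (N:ℝ))) :=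
      aux_rpow_half u (N:ℝ) hu
    calc |f x| ^ p ≤ (((1 + u) ^ 2 / 2) ^ (-a)) ^ p := h4
      _ = 2 ^ (N:ℝ) * (1 + u) ^ (-(2 * (N:ℝ))) := by rw [h5, h6]
      _ = g x := by simp only [hgdef]; rw [hnorm x, ← hudef]
  have hscale : ∫ x : (EuclideanSpace ℝ (Fin N)), (1 + ‖c⁻¹ • x‖) ^ (-(2 * (N:ℝ))) = c ^ N * K := by
    have := Measure.integral_comp_inv_smul_of_nonneg (volume : Measure (EuclideanSpace ℝ (Fin N)))
      (fun y : (EuclideanSpace ℝ (Fin N)) => (1 + ‖y‖) ^ (-(2 * (N:ℝ)))) hc.le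
    rw [hfin] at this
    rw [this, smul_eq_mul, hKdef]
  have hupp : I ≤ M * c ^ (N:ℝ) := by
    have s1 : I ≤ ∫ x in Metric.ball (0:(EuclideanSpace ℝ (Fin N))) 1, g x :=
      setIntegral_mono_on hIntf (hgint.integrableOn) measurableSet_ball hptwise
    have s2 : ∫ x in Metric.ball (0:(EuclideanSpace ℝ (Fin N))) 1, g x ≤ ∫ x : (EuclideanSpace ℝ (Fin N)), g x :=
      setIntegral_le_integral hgint (Filter.Eventually.of_forall hgnn)
    have s3 : ∫ x : (EuclideanSpace ℝ (Fin N)), g x = 2 ^ (N:ℝ) * (c ^ N * K) := by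
      rw [hgdef]
      rw [integral_const_mul, hscale]
    have s4 : 2 ^ (N:ℝ) * (c ^ N * K) ≤ M * c ^ (N:ℝ) := by
      rw [Real.rpow_natCast c N, hMdef]
      calc 2 ^ (N:ℝ) * (c ^ N * K) = (2 ^ (N:ℝ) * K) * c ^ N := by ring
        _ ≤ (2 ^ (N:ℝ) * K + 1) * c ^ N :=
            mul_le_mul_of_nonneg_right (by linarith) (pow_nonneg hc.le N)
    linarith
  -- solve for lam
  have hcN : (0:ℝ) < c ^ (N:ℝ) := Real.rpow_pos_of_pos hc _
  have hI0 : 0 < I := lt_of_lt_of_le (by positivity) hlow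
  have hlamI : lam ^ p * I = 1 := by
    have h1 : ((lam ^ p * I) ^ p⁻¹) ^ p = 1 := by rw [heq2, Real.one_rpow]
    rwa [← Real.rpow_mul (by positivity), inv_mul_cancel₀ hp0.ne', Real.rpow_one] at h1
  have hlamval : lam = I⁻¹ ^ p⁻¹ := by
    have h1 : lam ^ p = I⁻¹ := eq_inv_of_mul_eq_one_left (by linarith [hlamI])
    calc lam = (lam ^ p) ^ p⁻¹ := by
          rw [← Real.rpow_mul hlam.le, mul_inv_cancel₀ hp0.ne', Real.rpow_one]
      _ = I⁻¹ ^ p⁻¹ := by rw [h1]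
  have hca : (c ^ (N:ℝ))⁻¹ ^ p⁻¹ = c ^ (-(((N : ℝ) - 2 * s)) / 2) := by
    rw [← Real.rpow_neg_one (c ^ ((N:ℝ) : ℝ))]
    rw [← Real.rpow_mul hc.le, ← Real.rpow_mul hc.le, hexp]
    congr 1
    rw [← hNp]; ring
  constructor
  · -- lower bound for lam
    have h1 : (M * c ^ (N:ℝ))⁻¹ ≤ I⁻¹ := by
      apply inv_anti₀ hI0 hupp
    have h2 : ((M * c ^ (N:ℝ))⁻¹) ^ p⁻¹ ≤ I⁻¹ ^ p⁻¹ :=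
      Real.rpow_le_rpow (by positivity) h1 (by positivity)
    have h3 : ((M * c ^ (N:ℝ))⁻¹) ^ p⁻¹ = (M ^ p⁻¹)⁻¹ * c ^ (-(((N : ℝ) - 2 * s)) / 2) := by
      rw [mul_inv, Real.mul_rpow (by positivity) (by positivity), hca,
        Real.inv_rpow hM.le]
    have h4 : C⁻¹ * c ^ (-(((N : ℝ) - 2 * s)) / 2) ≤
        (M ^ p⁻¹)⁻¹ * c ^ (-(((N : ℝ) - 2 * s)) / 2) := by
      apply mul_le_mul_of_nonneg_right _ (Real.rpow_nonneg hc.le _)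
      apply inv_anti₀ (by positivity)
      exact le_max_right _ _
    rw [hlamval]
    calc C⁻¹ * c ^ (-(((N : ℝ) - 2 * s)) / 2) ≤
        (M ^ p⁻¹)⁻¹ * c ^ (-(((N : ℝ) - 2 * s)) / 2) := h4
      _ = ((M * c ^ (N:ℝ))⁻¹) ^ p⁻¹ := h3.symm
      _ ≤ I⁻¹ ^ p⁻¹ := h2
  · -- upper bound for lam
    have h1 : I⁻¹ ≤ (m * c ^ (N:ℝ))⁻¹ := by
      apply inv_anti₀ (by positivity) hlow
    have h2 : I⁻¹ ^ p⁻¹ ≤ ((m * c ^ (N:ℝ))⁻¹) ^ p⁻¹ :=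
      Real.rpow_le_rpow (by positivity) h1 (by positivity)
    have h3 : ((m * c ^ (N:ℝ))⁻¹) ^ p⁻¹ = (m⁻¹) ^ p⁻¹ * c ^ (-(((N : ℝ) - 2 * s)) / 2) := by
      rw [mul_inv, Real.mul_rpow (by positivity) (by positivity), hca]
    have h4 : (m⁻¹) ^ p⁻¹ * c ^ (-(((N : ℝ) - 2 * s)) / 2) ≤
        C * c ^ (-(((N : ℝ) - 2 * s)) / 2) := by
      apply mul_le_mul_of_nonneg_right (le_max_left _ _) (Real.rpow_nonneg hc.le _)
    rw [hlamval]
    calc I⁻¹ ^ p⁻¹ ≤ ((m * c ^ (N:ℝ))⁻¹) ^ p⁻¹ := h2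
      _ = (m⁻¹) ^ p⁻¹ * c ^ (-(((N : ℝ) - 2 * s)) / 2) := h3
      _ ≤ C * c ^ (-(((N : ℝ) - 2 * s)) / 2) := h4
end

section
/- Let N ≥ 1 and s ∈ (0, min(1, N/2)), and let v(r) = (1 + r²/c²)^{-(N-2s)/2} - (1 + 1/c²)^{-(N-2s)/2} for c ∈ (0, 1/3). Then there exist constants C₁, C₂ > 0 depending only on N and s such that C₁ c^N ≤ ∫₀¹ r^{N-1} |v(r)|^{2N/(N-2s)} dr ≤ C₂ c^N. -/
open Real MeasureTheory

set_option maxHeartbeats 1000000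

theorem radial_norm_of_truncated_bubble (N : ℕ) (hN : 1 ≤ N) (s : ℝ)
    (hs0 : 0 < s) (hs1 : s < min 1 ((N : ℝ) / 2)) :
    ∃ C₁ C₂ : ℝ, 0 < C₁ ∧ 0 < C₂ ∧
      ∀ c : ℝ, 0 < c → c < 1 / 3 →
        C₁ * c ^ (N : ℝ) ≤
          (∫ r in Set.Ioo (0 : ℝ) 1,
            r ^ ((N : ℝ) - 1) *
              |(1 + r ^ 2 / c ^ 2) ^ (-(((N : ℝ) - 2 * s)) / 2) -
                (1 + 1 / c ^ 2) ^ (-(((N : ℝ) - 2 * s)) / 2)| ^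
                (2 * (N : ℝ) / ((N : ℝ) - 2 * s))) ∧
        (∫ r in Set.Ioo (0 : ℝ) 1,
            r ^ ((N : ℝ) - 1) *
              |(1 + r ^ 2 / c ^ 2) ^ (-(((N : ℝ) - 2 * s)) / 2) -
                (1 + 1 / c ^ 2) ^ (-(((N : ℝ) - 2 * s)) / 2)| ^
                (2 * (N : ℝ) / ((N : ℝ) - 2 * s))) ≤ C₂ * c ^ (N : ℝ) := by
  have hN1 : (1:ℝ) ≤ (N:ℝ) := by exact_mod_cast hN
  have hNpos : (0:ℝ) < (N:ℝ) := by linarith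
  have hNne : (N:ℝ) ≠ 0 := hNpos.ne'
  have hsN : 2 * s < (N : ℝ) := by
    have := lt_of_lt_of_le hs1 (min_le_right 1 ((N:ℝ)/2)); linarith
  set a : ℝ := (N:ℝ) - 2*s with ha_def
  have ha : 0 < a := by rw [ha_def]; linarith
  set e : ℝ := -a / 2 with he_def
  set p : ℝ := 2*(N:ℝ)/a with hp_def
  have he : e < 0 := by
    rw [he_def]; exact div_neg_of_neg_of_pos (neg_lt_zero.2 ha) two_pos
  have hp : 0 < p := div_pos (by positivity) ha
  have hep : e * p = -(N:ℝ) := by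
    rw [he_def, hp_def]; field_simp
  have hδpos : (0:ℝ) < 2 ^ e - 10 ^ e :=
    sub_pos.2 (Real.rpow_lt_rpow_of_neg two_pos (by norm_num) he)
  set δ : ℝ := 2 ^ e - 10 ^ e with hδ_def
  refine ⟨δ ^ p / N, 2 / N, div_pos (Real.rpow_pos_of_pos hδpos p) hNpos,
    div_pos two_pos hNpos, ?_⟩
  intro c hc0 hc3
  have hc1 : c < 1 := by linarith
  have hc2 : (0:ℝ) < c^2 := by positivity
  set f : ℝ → ℝ := fun r => r ^ ((N : ℝ) - 1) *
      |(1 + r ^ 2 / c ^ 2) ^ e - (1 + 1 / c ^ 2) ^ e| ^ p with hf_def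
  have hbase : ∀ r : ℝ, (0:ℝ) < 1 + r^2/c^2 := fun r => by positivity
  have hBpos : (0:ℝ) < 1 + 1/c^2 := by positivity
  -- B ≤ A for r ∈ (0,1)
  have hAB : ∀ r : ℝ, 0 < r → r < 1 → (1+1/c^2)^e ≤ (1+r^2/c^2)^e := by
    intro r hr0 hr1
    apply Real.rpow_le_rpow_of_nonpos (hbase r) _ he.le
    have h1 : r^2 ≤ 1 := by nlinarith
    gcongr
  have habs : ∀ r : ℝ, 0 < r → r < 1 →
      |(1+r^2/c^2)^e - (1+1/c^2)^e| = (1+r^2/c^2)^e - (1+1/c^2)^e :=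
    fun r h0 h1 => abs_of_nonneg (sub_nonneg.2 (hAB r h0 h1))
  have hfnonneg : ∀ r ∈ Set.Ioo (0:ℝ) 1, 0 ≤ f r := by
    intro r hr
    exact mul_nonneg (Real.rpow_nonneg hr.1.le _) (Real.rpow_nonneg (abs_nonneg _) _)
  have hfle : ∀ r ∈ Set.Ioo (0:ℝ) 1, f r ≤ r ^ ((N:ℝ)-1) := by
    intro r hr
    have hA1 : (1+r^2/c^2)^e ≤ 1 :=
      Real.rpow_le_one_of_one_le_of_nonpos (le_add_of_nonneg_right (by positivity)) he.le
    have habs1 : |(1+r^2/c^2)^e - (1+1/c^2)^e| ≤ 1 := by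
      rw [habs r hr.1 hr.2]
      have : (0:ℝ) ≤ (1+1/c^2)^e := Real.rpow_nonneg hBpos.le e
      linarith
    have h2 : |(1+r^2/c^2)^e - (1+1/c^2)^e| ^ p ≤ 1 :=
      Real.rpow_le_one (abs_nonneg _) habs1 hp.le
    calc f r ≤ r ^ ((N:ℝ)-1) * 1 :=
          mul_le_mul_of_nonneg_left h2 (Real.rpow_nonneg hr.1.le _)
      _ = r ^ ((N:ℝ)-1) := mul_one _
  have hcont : Continuous f := by
    apply Continuous.mul
    · exact continuous_id.rpow_const (fun x => Or.inr (by linarith))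
    · apply Continuous.rpow_const _ (fun x => Or.inr hp.le)
      apply Continuous.abs
      apply Continuous.sub _ continuous_const
      exact (continuous_const.add ((continuous_pow 2).div_const _)).rpow_const
        (fun x => Or.inl (hbase x).ne')
  have hint : IntegrableOn f (Set.Ioo (0:ℝ) 1) := by
    refine Integrable.mono' (g := fun _ => (1:ℝ))
      (integrableOn_const measure_Ioo_lt_top.ne)
      (hcont.aestronglyMeasurable.restrict) ?_
    filter_upwards [ae_restrict_mem measurableSet_Ioo] with r hr
    rw [Real.norm_eq_abs, abs_of_nonneg (hfnonneg r hr)]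
    calc f r ≤ r ^ ((N:ℝ)-1) := hfle r hr
      _ ≤ 1 := Real.rpow_le_one hr.1.le hr.2.le (by linarith)
  -- integral of r^(N-1) over (0,c]
  have hIoc : ∫ r in Set.Ioc (0:ℝ) c, r ^ ((N:ℝ)-1) = c ^ (N:ℝ) / N := by
    rw [← intervalIntegral.integral_of_le hc0.le,
      integral_rpow (Or.inl (by linarith : (-1:ℝ) < (N:ℝ)-1)),
      sub_add_cancel, Real.zero_rpow hNne, sub_zero]
  have hIoo_c : ∫ r in Set.Ioo (0:ℝ) c, r ^ ((N:ℝ)-1) = c ^ (N:ℝ) / N := by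
    rw [← MeasureTheory.integral_Ioc_eq_integral_Ioo]; exact hIoc
  have hIntPow : IntegrableOn (fun r : ℝ => r ^ ((N:ℝ)-1)) (Set.Ioc (0:ℝ) c) := by
    have h := intervalIntegral.intervalIntegrable_rpow' (a := 0) (b := c)
      (r := (N:ℝ)-1) (by linarith)
    exact (intervalIntegrable_iff_integrableOn_Ioc_of_le hc0.le).1 h
  -- lower bound
  have low1 : δ^p/N * c ^ (N:ℝ) ≤ ∫ r in Set.Ioo (0:ℝ) c, f r := by
    have heq : ∫ r in Set.Ioo (0:ℝ) c, (r ^ ((N:ℝ)-1) * δ^p) = δ^p/N * c ^ (N:ℝ) := by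
      rw [MeasureTheory.integral_mul_const, hIoo_c]; ring
    rw [← heq]
    apply setIntegral_mono_on
    · exact (hIntPow.mono_set Set.Ioo_subset_Ioc_self).mul_const _
    · exact hint.mono_set (Set.Ioo_subset_Ioo_right hc1.le)
    · exact measurableSet_Ioo
    · intro r hr
      have hr0 := hr.1
      have hr1 : r < 1 := lt_trans hr.2 hc1
      have hA : (2:ℝ)^e ≤ (1+r^2/c^2)^e := by
        apply Real.rpow_le_rpow_of_nonpos (hbase r) _ he.le
        have : r^2 ≤ c^2 := pow_le_pow_left₀ hr0.le hr.2.le 2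
        have h2 : r^2/c^2 ≤ 1 := (div_le_one hc2).2 this
        linarith
      have hB' : (1+1/c^2)^e ≤ (10:ℝ)^e := by
        apply Real.rpow_le_rpow_of_nonpos (by norm_num) _ he.le
        have h9 : 9 * c^2 ≤ 1 := by nlinarith
        have : (9:ℝ) ≤ 1/c^2 := (le_div_iff₀ hc2).2 (by linarith)
        linarith
      have hδle : δ ≤ |(1+r^2/c^2)^e - (1+1/c^2)^e| := by
        rw [habs r hr0 hr1, hδ_def]
        exact sub_le_sub hA hB'
      exact mul_le_mul_of_nonneg_left
        (Real.rpow_le_rpow hδpos.le hδle hp.le) (Real.rpow_nonneg hr0.le _)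
  have low2 : ∫ r in Set.Ioo (0:ℝ) c, f r ≤ ∫ r in Set.Ioo (0:ℝ) 1, f r := by
    apply setIntegral_mono_set hint ?_
      (HasSubset.Subset.eventuallyLE (Set.Ioo_subset_Ioo_right hc1.le))
    filter_upwards [ae_restrict_mem measurableSet_Ioo] with r hr using hfnonneg r hr
  -- upper bound
  have hsplit : ∫ r in Set.Ioo (0:ℝ) 1, f r =
      (∫ r in Set.Ioc (0:ℝ) c, f r) + ∫ r in Set.Ioo c 1, f r := by
    rw [← Set.Ioc_union_Ioo_eq_Ioo hc0.le hc1]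
    apply setIntegral_union _ measurableSet_Ioo
    · exact hint.mono_set (Set.Ioc_subset_Ioo_right hc1)
    · exact hint.mono_set (Set.Ioo_subset_Ioo_left hc0.le)
    · exact Set.disjoint_left.2 fun x hx hx' => absurd hx.2 (not_le.2 hx'.1)
  have up1 : ∫ r in Set.Ioc (0:ℝ) c, f r ≤ c ^ (N:ℝ) / N := by
    rw [← hIoc]
    apply setIntegral_mono_on (hint.mono_set (Set.Ioc_subset_Ioo_right hc1))
      hIntPow measurableSet_Ioc
    intro r hr
    exact hfle r ⟨hr.1, lt_of_le_of_lt hr.2 hc1⟩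
  have h0uIcc : (0:ℝ) ∉ Set.uIcc c 1 := by
    rw [Set.uIcc_of_le hc1.le, Set.mem_Icc]
    exact fun h => absurd h.1 (not_le.2 hc0)
  have hIoc2 : ∫ r in Set.Ioo c 1, (c^(2*(N:ℝ)) * r ^ (-(N:ℝ)-1)) =
      c^(2*(N:ℝ)) * ((c^(-(N:ℝ)) - 1)/N) := by
    rw [← MeasureTheory.integral_Ioc_eq_integral_Ioo,
      ← intervalIntegral.integral_of_le hc1.le,
      intervalIntegral.integral_const_mul,
      integral_rpow (Or.inr ⟨by intro h; apply hNne; linarith, h0uIcc⟩)]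
    congr 1
    rw [sub_add_cancel, Real.one_rpow, div_neg, ← neg_div, neg_sub]
  have hboundInt : IntegrableOn (fun r : ℝ => c^(2*(N:ℝ)) * r ^ (-(N:ℝ)-1))
      (Set.Ioo c 1) := by
    have h := intervalIntegral.intervalIntegrable_rpow (μ := volume) (a := c) (b := 1)
      (r := -(N:ℝ)-1) (Or.inr h0uIcc)
    exact (((intervalIntegrable_iff_integrableOn_Ioc_of_le hc1.le).1 h).mono_set
      Set.Ioo_subset_Ioc_self).const_mul _
  have hpow : ∀ r : ℝ, 0 < r → (r^2/c^2 : ℝ) ^ (-(N:ℝ)) = c^(2*(N:ℝ)) * r^(-(2*(N:ℝ))) := by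
    intro r hr
    have h2 : (2*(N:ℝ)) = ((2*N : ℕ) : ℝ) := by push_cast; ring
    rw [Real.rpow_neg (by positivity), h2, Real.rpow_neg hr.le,
      Real.rpow_natCast, Real.rpow_natCast, Real.rpow_natCast]
    rw [div_pow, pow_mul, pow_mul]
    field_simp
  have up2 : ∫ r in Set.Ioo c 1, f r ≤ c ^ (N:ℝ) / N := by
    have step1 : ∫ r in Set.Ioo c 1, f r ≤
        ∫ r in Set.Ioo c 1, (c^(2*(N:ℝ)) * r ^ (-(N:ℝ)-1)) := by
      apply setIntegral_mono_on (hint.mono_set (Set.Ioo_subset_Ioo_left hc0.le))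
        hboundInt measurableSet_Ioo
      intro r hr
      have hrc := hr.1
      have hr1 := hr.2
      have hr0 : 0 < r := lt_trans hc0 hrc
      have hAle : (1+r^2/c^2)^e ≤ (r^2/c^2)^e :=
        Real.rpow_le_rpow_of_nonpos (by positivity) (by linarith) he.le
      have habs' : |(1+r^2/c^2)^e - (1+1/c^2)^e| ≤ (r^2/c^2)^e := by
        rw [habs r hr0 hr1]
        have : (0:ℝ) ≤ (1+1/c^2)^e := Real.rpow_nonneg hBpos.le e
        linarith
      have hstep : |(1+r^2/c^2)^e - (1+1/c^2)^e| ^ p ≤ ((r^2/c^2)^e)^p :=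
        Real.rpow_le_rpow (abs_nonneg _) habs' hp.le
      have hpow2 : ((r^2/c^2 : ℝ)^e)^p = c^(2*(N:ℝ)) * r^(-(2*(N:ℝ))) := by
        rw [← Real.rpow_mul (by positivity), hep, hpow r hr0]
      have hmul : r ^ ((N:ℝ)-1) * (c^(2*(N:ℝ)) * r^(-(2*(N:ℝ)))) =
          c^(2*(N:ℝ)) * r ^ (-(N:ℝ)-1) := by
        rw [mul_comm (r ^ ((N:ℝ)-1)), mul_assoc, ← Real.rpow_add hr0]
        congr 2
        ring
      calc f r ≤ r ^ ((N:ℝ)-1) * (c^(2*(N:ℝ)) * r^(-(2*(N:ℝ)))) := by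
            rw [hf_def]
            refine mul_le_mul_of_nonneg_left ?_ (Real.rpow_nonneg hr0.le _)
            rw [← hpow2]; exact hstep
        _ = c^(2*(N:ℝ)) * r ^ (-(N:ℝ)-1) := hmul
    have step2 : c^(2*(N:ℝ)) * ((c^(-(N:ℝ)) - 1)/N) ≤ c ^ (N:ℝ) / N := by
      have h1 : c^(2*(N:ℝ)) * c^(-(N:ℝ)) = c^(N:ℝ) := by
        rw [← Real.rpow_add hc0]; congr 1; ring
      have h2 : (0:ℝ) ≤ c^(2*(N:ℝ)) := Real.rpow_nonneg hc0.le _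
      rw [mul_div_assoc' , mul_sub, h1, mul_one]
      gcongr
      linarith
    calc ∫ r in Set.Ioo c 1, f r ≤ _ := step1
      _ = c^(2*(N:ℝ)) * ((c^(-(N:ℝ)) - 1)/N) := hIoc2
      _ ≤ c ^ (N:ℝ) / N := step2
  constructor
  · exact le_trans low1 low2
  · rw [hsplit]
    calc (∫ r in Set.Ioc (0:ℝ) c, f r) + ∫ r in Set.Ioo c 1, f r
        ≤ c ^ (N:ℝ) / N + c ^ (N:ℝ) / N := add_le_add up1 up2
      _ = 2 / N * c ^ (N:ℝ) := by ring
end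

section
/- Let N ≥ 1, s ∈ (0, min(1, N/2)), and set Φ_ε(x) = (1 + |x|²/ε²)^{-(N-2s)/2}. Then lim_{ε→0} ε^{-(N-2s)} ‖u_ε‖²_{L^{2N/(N-2s)}(ℝ^N)} = ‖Φ_1‖²_{L^{2N/(N-2s)}(ℝ^N)}, where u_ε(x) = [ (1+|x|²/ε²)^{-(N-2s)/2} - (1+R²/ε²)^{-(N-2s)/2} ] χ_{B_R(0)}(x) for a fixed R > 0. -/
open Real MeasureTheory Filter

theorem rescaled_Lp_norm_of_minimizing_sequence (N : ℕ) (hN : 1 ≤ N) (s : ℝ)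
    (hs0 : 0 < s) (hs1 : s < min 1 ((N : ℝ) / 2)) (R : ℝ) (hR : 0 < R) :
    Tendsto
      (fun ε : ℝ =>
        ε ^ (-(((N : ℝ) - 2 * s))) *
          (∫ x : EuclideanSpace ℝ (Fin N),
              |(Metric.ball (0 : EuclideanSpace ℝ (Fin N)) R).indicator
                (fun x => (1 + ‖x‖ ^ 2 / ε ^ 2) ^ (-(((N : ℝ) - 2 * s)) / 2) -
                  (1 + R ^ 2 / ε ^ 2) ^ (-(((N : ℝ) - 2 * s)) / 2)) x| ^
              (2 * (N : ℝ) / ((N : ℝ) - 2 * s))) ^ (((N : ℝ) - 2 * s) / (N : ℝ)))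
      (nhdsWithin 0 (Set.Ioi 0))
      (nhds ((∫ x : EuclideanSpace ℝ (Fin N),
          |(1 + ‖x‖ ^ 2) ^ (-(((N : ℝ) - 2 * s)) / 2)| ^
            (2 * (N : ℝ) / ((N : ℝ) - 2 * s))) ^ (((N : ℝ) - 2 * s) / (N : ℝ)))) := by
  have hN0 : 0 < (N : ℝ) := by exact_mod_cast hN
  set E := EuclideanSpace ℝ (Fin N) with hE
  set α : ℝ := (N : ℝ) - 2 * s with hαdef
  have hα : 0 < α := by
    have h2 := (lt_min_iff.mp hs1).2
    simp only [hαdef]; linarith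
  set p : ℝ := 2 * (N : ℝ) / α with hpdef
  have hp : 0 < p := by positivity
  have hexp : -α / 2 * p = -(N : ℝ) := by
    rw [hpdef]
    field_simp
  -- the constant subtracted
  set c : ℝ → ℝ := fun ε => (1 + R ^ 2 / ε ^ 2) ^ (-α / 2) with hcdef
  -- rescaled integrand
  set G : ℝ → E → ℝ := fun ε y =>
    (Metric.ball (0 : E) (R / ε)).indicator
      (fun y => |(1 + ‖y‖ ^ 2) ^ (-α / 2) - c ε| ^ p) y with hGdef
  set bound : E → ℝ := fun y => (1 + ‖y‖ ^ 2) ^ (-α / 2 * p) with hbdef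
  have hbound_eq : ∀ y : E, bound y = (((1 : ℝ) + ‖y‖ ^ 2) ^ (-α / 2)) ^ p := by
    intro y
    simp only [hbdef]
    rw [Real.rpow_mul (by positivity)]
  have hGnonneg : ∀ ε, ∀ y : E, 0 ≤ G ε y := by
    intro ε y
    simp only [hGdef]
    apply Set.indicator_nonneg
    intro y _
    positivity
  have hbound_int : Integrable bound (volume : Measure E) := by
    have hfr : Module.finrank ℝ E = N := finrank_euclideanSpace_fin
    have h2N : ((Module.finrank ℝ E : ℝ)) < 2 * (N : ℝ) := by
      rw [hfr]; linarith
    have := integrable_rpow_neg_one_add_norm_sq (E := E) (μ := volume) h2N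
    have he : -α / 2 * p = -(2 * (N : ℝ)) / 2 := by rw [hexp]; ring
    simpa [hbdef, he] using this
  -- dominated convergence
  have key : Tendsto (fun ε => ∫ y : E, G ε y) (nhdsWithin 0 (Set.Ioi 0))
      (nhds (∫ y : E, bound y)) := by
    apply tendsto_integral_filter_of_dominated_convergence bound
    · filter_upwards [self_mem_nhdsWithin] with ε hε
      apply (Measurable.aestronglyMeasurable ?_)
      apply Measurable.indicator ?_ measurableSet_ball
      fun_prop
    · filter_upwards [self_mem_nhdsWithin] with ε hε
      filter_upwards with y
      have hε : (0:ℝ) < ε := hε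
      rw [Real.norm_eq_abs, abs_of_nonneg (hGnonneg ε y)]
      by_cases hy : y ∈ Metric.ball (0 : E) (R / ε)
      · simp only [hGdef, Set.indicator_of_mem hy]
        have hy' : ‖y‖ < R / ε := by simpa [mem_ball_zero_iff] using hy
        have h1 : (0:ℝ) < 1 + ‖y‖ ^ 2 := by positivity
        have hb : 1 + ‖y‖ ^ 2 ≤ 1 + R ^ 2 / ε ^ 2 := by
          have : ‖y‖ ^ 2 ≤ (R / ε) ^ 2 := by
            apply pow_le_pow_left₀ (norm_nonneg y) hy'.le
          have h2 : (R / ε) ^ 2 = R ^ 2 / ε ^ 2 := div_pow R ε 2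
          linarith [this, h2.le]
        have hc1 : c ε ≤ (1 + ‖y‖ ^ 2) ^ (-α / 2) :=
          Real.rpow_le_rpow_of_nonpos h1 hb (by linarith)
        have hc0 : 0 ≤ c ε := Real.rpow_nonneg (by positivity) _
        have habs : |(1 + ‖y‖ ^ 2) ^ (-α / 2) - c ε| ≤ (1 + ‖y‖ ^ 2) ^ (-α / 2) := by
          rw [abs_of_nonneg (by linarith)]; linarith
        calc |(1 + ‖y‖ ^ 2) ^ (-α / 2) - c ε| ^ p
            ≤ ((1 + ‖y‖ ^ 2) ^ (-α / 2)) ^ p :=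
              Real.rpow_le_rpow (abs_nonneg _) habs hp.le
          _ = bound y := (hbound_eq y).symm
      · simp only [hGdef, Set.indicator_of_notMem hy]
        simp only [hbdef]
        positivity
    · exact hbound_int
    · filter_upwards with y
      have hc0 : Tendsto c (nhdsWithin 0 (Set.Ioi 0)) (nhds 0) := by
        have h1 : Tendsto (fun ε : ℝ => ε ^ 2) (nhdsWithin 0 (Set.Ioi 0))
            (nhdsWithin 0 (Set.Ioi 0)) := by
          apply tendsto_nhdsWithin_of_tendsto_nhds_of_eventually_within
          · have : Tendsto (fun ε : ℝ => ε ^ 2) (nhds 0) (nhds 0) := by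
              simpa using (continuous_pow 2).tendsto (0 : ℝ)
            exact this.mono_left nhdsWithin_le_nhds
          · filter_upwards [self_mem_nhdsWithin] with ε (hε : (0:ℝ) < ε)
            exact pow_pos hε 2
        have h2 : Tendsto (fun ε : ℝ => R ^ 2 / ε ^ 2) (nhdsWithin 0 (Set.Ioi 0)) atTop := by
          have := tendsto_inv_nhdsGT_zero.comp h1
          have h3 := this.const_mul_atTop (by positivity : (0:ℝ) < R ^ 2)
          simpa [div_eq_mul_inv, Function.comp_def] using h3
        have h4 : Tendsto (fun ε : ℝ => 1 + R ^ 2 / ε ^ 2) (nhdsWithin 0 (Set.Ioi 0)) atTop :=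
          tendsto_atTop_add_const_left _ 1 h2
        have h5 := (tendsto_rpow_neg_atTop (by positivity : (0:ℝ) < α / 2)).comp h4
        simpa [hcdef, Function.comp_def, neg_div] using h5
      have hlimG : Tendsto (fun ε => |(1 + ‖y‖ ^ 2) ^ (-α / 2) - c ε| ^ p)
          (nhdsWithin 0 (Set.Ioi 0)) (nhds (bound y)) := by
        have h1 : Tendsto (fun ε => (1 + ‖y‖ ^ 2) ^ (-α / 2) - c ε)
            (nhdsWithin 0 (Set.Ioi 0)) (nhds ((1 + ‖y‖ ^ 2) ^ (-α / 2))) := by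
          simpa using tendsto_const_nhds.sub hc0
        have h2 := h1.abs
        have ha : (0:ℝ) < (1 + ‖y‖ ^ 2) ^ (-α / 2) := Real.rpow_pos_of_pos (by positivity) _
        have h3 : ContinuousAt (fun t : ℝ => t ^ p) |(1 + ‖y‖ ^ 2) ^ (-α / 2)| :=
          Real.continuousAt_rpow_const _ p (Or.inl (by rw [abs_of_pos ha]; exact ha.ne'))
        have h4 := h3.tendsto.comp h2
        rw [abs_of_pos ha] at h4
        rw [hbound_eq y]
        exact h4
      apply hlimG.congr'
      have hmem : Set.Ioo (0:ℝ) (R / (‖y‖ + 1)) ∈ nhdsWithin (0:ℝ) (Set.Ioi 0) := by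
        apply Ioo_mem_nhdsGT_of_mem
        constructor
        · exact le_refl 0
        · positivity
      filter_upwards [hmem] with ε hε
      have hε0 : (0:ℝ) < ε := hε.1
      have hyball : y ∈ Metric.ball (0 : E) (R / ε) := by
        rw [mem_ball_zero_iff]
        rw [lt_div_iff₀ hε0]
        calc ‖y‖ * ε ≤ (‖y‖ + 1) * ε := by nlinarith [norm_nonneg y]
          _ < R := by
            have := hε.2
            rw [lt_div_iff₀ (by positivity : (0:ℝ) < ‖y‖ + 1)] at this
            linarith [this]
      simp only [hGdef, Set.indicator_of_mem hyball]
  -- identify the original expression with (∫ G ε) ^ (α / N)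
  have heq : ∀ᶠ ε in nhdsWithin (0:ℝ) (Set.Ioi 0),
      ε ^ (-α) *
        (∫ x : E, |(Metric.ball (0 : E) R).indicator
            (fun x => (1 + ‖x‖ ^ 2 / ε ^ 2) ^ (-α / 2) - c ε) x| ^ p) ^ (α / (N : ℝ))
      = (∫ y : E, G ε y) ^ (α / (N : ℝ)) := by
    filter_upwards [self_mem_nhdsWithin] with ε (hε : (0:ℝ) < ε)
    have hchange : (∫ x : E, |(Metric.ball (0 : E) R).indicator
        (fun x => (1 + ‖x‖ ^ 2 / ε ^ 2) ^ (-α / 2) - c ε) x| ^ p)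
        = ∫ x : E, G ε (ε⁻¹ • x) := by
      congr 1
      ext x
      have hnorm : ‖ε⁻¹ • x‖ = ‖x‖ / ε := by
        rw [norm_smul, norm_inv, Real.norm_eq_abs, abs_of_pos hε, div_eq_inv_mul]
      by_cases hx : x ∈ Metric.ball (0 : E) R
      · have hx' : ε⁻¹ • x ∈ Metric.ball (0 : E) (R / ε) := by
          rw [mem_ball_zero_iff, hnorm]
          exact div_lt_div_of_pos_right (mem_ball_zero_iff.mp hx) hε
        simp only [hGdef, Set.indicator_of_mem hx, Set.indicator_of_mem hx', hnorm, div_pow]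
      · have hx' : ε⁻¹ • x ∉ Metric.ball (0 : E) (R / ε) := by
          rw [mem_ball_zero_iff, hnorm]
          intro h
          exact hx (mem_ball_zero_iff.mpr (by
            have := (div_lt_div_iff_of_pos_right ?_).mp h
            · exact this
            · exact hε))
        simp only [hGdef, Set.indicator_of_notMem hx, Set.indicator_of_notMem hx',
          abs_zero]
        exact Real.zero_rpow hp.ne'
    rw [hchange]
    rw [MeasureTheory.Measure.integral_comp_inv_smul_of_nonneg volume (G ε) hε.le]
    have hfr : Module.finrank ℝ E = N := finrank_euclideanSpace_fin
    rw [hfr, smul_eq_mul]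
    have hI : 0 ≤ ∫ y : E, G ε y := integral_nonneg (hGnonneg ε)
    rw [Real.mul_rpow (by positivity) hI]
    rw [← Real.rpow_natCast ε N, ← Real.rpow_mul hε.le]
    have hNα : (N : ℝ) * (α / (N : ℝ)) = α := by field_simp
    rw [hNα, ← mul_assoc, ← Real.rpow_add hε, neg_add_cancel, Real.rpow_zero, one_mul]
  have hfinal := ((Real.continuousAt_rpow_const _ (α / (N : ℝ))
      (Or.inr (by positivity))).tendsto.comp key)
  have htarget : (∫ x : E, |(1 + ‖x‖ ^ 2) ^ (-α / 2)| ^ p) = ∫ y : E, bound y := by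
    congr 1
    ext y
    rw [hbound_eq y, abs_of_pos (Real.rpow_pos_of_pos (by positivity) _)]
  rw [htarget]
  exact Filter.Tendsto.congr' (by filter_upwards [heq] with ε h; exact h.symm) hfinal
end

section
/- Let N ≥ 1 and s ∈ (0, min(1, N/2)). Then the double integral ∫₂^∞ ∫₂^∞ σ^{N-1} t^{N-1} (σ + t)^{-(N+2s)} | σ^{-(N-2s)} - t^{-(N-2s)} |² dσ dt is finite and strictly positive. -/
open Real MeasureTheory Set

lemma splitting_bound {A c : ℝ} (hc0 : 0 ≤ c) (hcA : c ≤ A) {σ t : ℝ}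
    (hσ : 0 < σ) (ht : 0 < t) :
    (σ + t) ^ (-A) ≤ σ ^ (-c) * t ^ (c - A) := by
  have hst : 0 < σ + t := by linarith
  have key : σ ^ c * t ^ (A - c) ≤ (σ + t) ^ A := by
    calc σ ^ c * t ^ (A - c) ≤ (σ + t) ^ c * (σ + t) ^ (A - c) := by
          gcongr <;> linarith
      _ = (σ + t) ^ A := by rw [← Real.rpow_add hst]; ring_nf
  rw [Real.rpow_neg hst.le, Real.rpow_neg hσ.le,
    show c - A = -(A - c) by ring, Real.rpow_neg ht.le, ← mul_inv]
  exact inv_anti₀ (by positivity) key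

lemma term_bound {Nr A a c : ℝ} (hc0 : 0 ≤ c) (hcA : c ≤ A) {σ t : ℝ}
    (hσ : 0 < σ) (ht : 0 < t) :
    σ ^ (Nr - 1) * t ^ (Nr - 1) * (σ + t) ^ (-A) * σ ^ (-(2 * a)) ≤
      σ ^ (Nr - 1 - 2 * a - c) * t ^ (Nr - 1 + c - A) := by
  have h := splitting_bound hc0 hcA hσ ht
  calc σ ^ (Nr - 1) * t ^ (Nr - 1) * (σ + t) ^ (-A) * σ ^ (-(2 * a))
      = (σ ^ (Nr - 1) * σ ^ (-(2 * a)) * t ^ (Nr - 1)) * (σ + t) ^ (-A) := by ring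
    _ ≤ (σ ^ (Nr - 1) * σ ^ (-(2 * a)) * t ^ (Nr - 1)) * (σ ^ (-c) * t ^ (c - A)) := by
        apply mul_le_mul_of_nonneg_left h; positivity
    _ = σ ^ (Nr - 1 - 2 * a - c) * t ^ (Nr - 1 + c - A) := by
        rw [show Nr - 1 - 2 * a - c = Nr - 1 + -(2 * a) + -c by ring,
          show Nr - 1 + c - A = (c - A) + (Nr - 1) by ring,
          Real.rpow_add hσ, Real.rpow_add hσ, Real.rpow_add ht]
        ring

theorem double_integral_finite_positive (N : ℕ) (hN : 1 ≤ N) (s : ℝ)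
    (hs0 : 0 < s) (hs1 : s < min 1 ((N : ℝ) / 2)) :
    IntegrableOn
      (fun p : ℝ × ℝ =>
        p.1 ^ ((N : ℝ) - 1) * p.2 ^ ((N : ℝ) - 1) * (p.1 + p.2) ^ (-(((N : ℝ) + 2 * s))) *
          |p.1 ^ (-(((N : ℝ) - 2 * s))) - p.2 ^ (-(((N : ℝ) - 2 * s)))| ^ 2)
      (Set.Ioi (2 : ℝ) ×ˢ Set.Ioi (2 : ℝ)) ∧
    0 < ∫ p in Set.Ioi (2 : ℝ) ×ˢ Set.Ioi (2 : ℝ),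
        p.1 ^ ((N : ℝ) - 1) * p.2 ^ ((N : ℝ) - 1) * (p.1 + p.2) ^ (-(((N : ℝ) + 2 * s))) *
          |p.1 ^ (-(((N : ℝ) - 2 * s))) - p.2 ^ (-(((N : ℝ) - 2 * s)))| ^ 2 := by
  obtain ⟨hs1', hsN⟩ := lt_min_iff.mp hs1
  have hNr : (1 : ℝ) ≤ (N : ℝ) := by exact_mod_cast hN
  set f : ℝ × ℝ → ℝ := fun p : ℝ × ℝ =>
    p.1 ^ ((N : ℝ) - 1) * p.2 ^ ((N : ℝ) - 1) * (p.1 + p.2) ^ (-(((N : ℝ) + 2 * s))) *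
      |p.1 ^ (-(((N : ℝ) - 2 * s))) - p.2 ^ (-(((N : ℝ) - 2 * s)))| ^ 2 with hfdef
  set c : ℝ := (max (4 * s - (N : ℝ)) 0 + 2 * s) / 2 with hcdef
  have hc0 : 0 ≤ c := by
    have := le_max_right (4 * s - (N : ℝ)) 0
    rw [hcdef]; linarith
  have hc2 : c < 2 * s := by
    have h1 : max (4 * s - (N : ℝ)) 0 < 2 * s :=
      max_lt (by linarith) (by linarith)
    rw [hcdef]; linarith
  have hc4 : 4 * s - (N : ℝ) < c := by
    have := le_max_left (4 * s - (N : ℝ)) 0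
    rw [hcdef]; linarith
  have hcA : c ≤ (N : ℝ) + 2 * s := by linarith
  set e₁ : ℝ := (N : ℝ) - 1 - 2 * ((N : ℝ) - 2 * s) - c with he₁def
  set e₂ : ℝ := (N : ℝ) - 1 + c - ((N : ℝ) + 2 * s) with he₂def
  have he₁ : e₁ < -1 := by rw [he₁def]; linarith
  have he₂ : e₂ < -1 := by rw [he₂def]; linarith
  have hbox : MeasurableSet (Set.Ioi (2 : ℝ) ×ˢ Set.Ioi (2 : ℝ)) :=
    measurableSet_Ioi.prod measurableSet_Ioi
  -- nonnegativity on the box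
  have hnn : ∀ p : ℝ × ℝ, p ∈ Set.Ioi (2 : ℝ) ×ˢ Set.Ioi (2 : ℝ) → 0 ≤ f p := by
    rintro ⟨σ, t⟩ ⟨hσm, htm⟩
    have hσ0 : (0 : ℝ) ≤ σ := by have := mem_Ioi.mp hσm; linarith
    have ht0 : (0 : ℝ) ≤ t := by have := mem_Ioi.mp htm; linarith
    exact mul_nonneg (mul_nonneg (mul_nonneg (Real.rpow_nonneg hσ0 _)
      (Real.rpow_nonneg ht0 _)) (Real.rpow_nonneg (by linarith) _)) (sq_nonneg _)
  -- continuity / measurability on the box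
  have hcont : ContinuousOn f (Set.Ioi (2 : ℝ) ×ˢ Set.Ioi (2 : ℝ)) := by
    have h1 : ∀ p : ℝ × ℝ, p ∈ Set.Ioi (2 : ℝ) ×ˢ Set.Ioi (2 : ℝ) → (0:ℝ) < p.1 := by
      rintro ⟨σ, t⟩ ⟨hσm, _⟩; have := mem_Ioi.mp hσm; simpa using by linarith
    have h2 : ∀ p : ℝ × ℝ, p ∈ Set.Ioi (2 : ℝ) ×ˢ Set.Ioi (2 : ℝ) → (0:ℝ) < p.2 := by
      rintro ⟨σ, t⟩ ⟨_, htm⟩; have := mem_Ioi.mp htm; simpa using by linarith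
    apply ContinuousOn.mul
    · apply ContinuousOn.mul
      · apply ContinuousOn.mul
        · exact continuousOn_fst.rpow_const fun p hp => Or.inl (ne_of_gt (h1 p hp))
        · exact continuousOn_snd.rpow_const fun p hp => Or.inl (ne_of_gt (h2 p hp))
      · exact (continuousOn_fst.add continuousOn_snd).rpow_const
          fun p hp => Or.inl (by have := h1 p hp; have := h2 p hp; exact ne_of_gt (show (0:ℝ) < p.1 + p.2 by linarith))
    · exact (((continuousOn_fst.rpow_const fun p hp => Or.inl (ne_of_gt (h1 p hp))).sub
        (continuousOn_snd.rpow_const fun p hp => Or.inl (ne_of_gt (h2 p hp)))).abs).pow 2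
  have hmeas : AEStronglyMeasurable f
      (volume.restrict (Set.Ioi (2 : ℝ) ×ˢ Set.Ioi (2 : ℝ))) :=
    hcont.aestronglyMeasurable hbox
  -- integrable dominating function
  have hI1 : IntegrableOn (fun x : ℝ => x ^ e₁) (Set.Ioi (2 : ℝ)) volume :=
    integrableOn_Ioi_rpow_of_lt he₁ (by norm_num)
  have hI2 : IntegrableOn (fun x : ℝ => x ^ e₂) (Set.Ioi (2 : ℝ)) volume :=
    integrableOn_Ioi_rpow_of_lt he₂ (by norm_num)
  have hmeq : ((volume.restrict (Set.Ioi (2:ℝ))).prod (volume.restrict (Set.Ioi (2:ℝ))))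
      = (volume : Measure (ℝ × ℝ)).restrict (Set.Ioi (2 : ℝ) ×ˢ Set.Ioi (2 : ℝ)) := by
    rw [Measure.prod_restrict, ← Measure.volume_eq_prod]
  have hprod : Integrable (fun p : ℝ × ℝ => 2 * (p.1 ^ e₁ * p.2 ^ e₂ + p.1 ^ e₂ * p.2 ^ e₁))
      ((volume : Measure (ℝ × ℝ)).restrict (Set.Ioi (2 : ℝ) ×ˢ Set.Ioi (2 : ℝ))) := by
    rw [← hmeq]
    exact ((hI1.mul_prod hI2).add (hI2.mul_prod hI1)).const_mul 2
  -- pointwise bound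
  have hbd : ∀ p : ℝ × ℝ, p ∈ Set.Ioi (2 : ℝ) ×ˢ Set.Ioi (2 : ℝ) →
      ‖f p‖ ≤ 2 * (p.1 ^ e₁ * p.2 ^ e₂ + p.1 ^ e₂ * p.2 ^ e₁) := by
    rintro ⟨σ, t⟩ ⟨hσm, htm⟩
    have hσ : (0 : ℝ) < σ := by have := mem_Ioi.mp hσm; linarith
    have ht : (0 : ℝ) < t := by have := mem_Ioi.mp htm; linarith
    rw [Real.norm_eq_abs, abs_of_nonneg (hnn _ ⟨hσm, htm⟩)]
    have hX2 : (σ ^ (-(((N:ℝ) - 2*s))))^2 = σ ^ (-(2 * ((N:ℝ) - 2*s))) := by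
      rw [show -(2 * ((N:ℝ) - 2*s)) = -(((N:ℝ) - 2*s)) + -(((N:ℝ) - 2*s)) by ring,
        Real.rpow_add hσ, sq]
    have hY2 : (t ^ (-(((N:ℝ) - 2*s))))^2 = t ^ (-(2 * ((N:ℝ) - 2*s))) := by
      rw [show -(2 * ((N:ℝ) - 2*s)) = -(((N:ℝ) - 2*s)) + -(((N:ℝ) - 2*s)) by ring,
        Real.rpow_add ht, sq]
    have hXnn : 0 ≤ σ ^ (-(((N:ℝ) - 2*s))) := Real.rpow_nonneg hσ.le _
    have hYnn : 0 ≤ t ^ (-(((N:ℝ) - 2*s))) := Real.rpow_nonneg ht.le _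
    have h1 : |σ ^ (-(((N:ℝ) - 2*s))) - t ^ (-(((N:ℝ) - 2*s)))| ^ 2 ≤
        2 * (σ ^ (-(2 * ((N:ℝ) - 2*s))) + t ^ (-(2 * ((N:ℝ) - 2*s)))) := by
      have habs : |σ ^ (-(((N:ℝ) - 2*s))) - t ^ (-(((N:ℝ) - 2*s)))| ≤
          σ ^ (-(((N:ℝ) - 2*s))) + t ^ (-(((N:ℝ) - 2*s))) := by
        calc |σ ^ (-(((N:ℝ) - 2*s))) - t ^ (-(((N:ℝ) - 2*s)))| ≤
            |σ ^ (-(((N:ℝ) - 2*s)))| + |t ^ (-(((N:ℝ) - 2*s)))| := abs_sub _ _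
          _ = _ := by rw [abs_of_nonneg hXnn, abs_of_nonneg hYnn]
      have hsq : |σ ^ (-(((N:ℝ) - 2*s))) - t ^ (-(((N:ℝ) - 2*s)))| ^ 2 ≤
          (σ ^ (-(((N:ℝ) - 2*s))) + t ^ (-(((N:ℝ) - 2*s)))) ^ 2 :=
        pow_le_pow_left₀ (abs_nonneg _) habs 2
      nlinarith [sq_nonneg (σ ^ (-(((N:ℝ) - 2*s))) - t ^ (-(((N:ℝ) - 2*s)))), hX2, hY2]
    have hT1 := term_bound (Nr := (N:ℝ)) (a := (N:ℝ) - 2*s) hc0 hcA hσ ht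
    have hT2 := term_bound (Nr := (N:ℝ)) (a := (N:ℝ) - 2*s) hc0 hcA ht hσ
    rw [add_comm t σ] at hT2
    have hPnn : 0 ≤ σ ^ ((N:ℝ) - 1) * t ^ ((N:ℝ) - 1) * (σ + t) ^ (-(((N:ℝ) + 2*s))) := by
      have : (0:ℝ) < σ + t := by linarith
      positivity
    calc f (σ, t) ≤ (σ ^ ((N:ℝ) - 1) * t ^ ((N:ℝ) - 1) * (σ + t) ^ (-(((N:ℝ) + 2*s)))) *
          (2 * (σ ^ (-(2 * ((N:ℝ) - 2*s))) + t ^ (-(2 * ((N:ℝ) - 2*s))))) := by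
          rw [hfdef]; exact mul_le_mul_of_nonneg_left h1 hPnn
      _ = 2 * ((σ ^ ((N:ℝ) - 1) * t ^ ((N:ℝ) - 1) * (σ + t) ^ (-(((N:ℝ) + 2*s))) *
            σ ^ (-(2 * ((N:ℝ) - 2*s)))) +
          (t ^ ((N:ℝ) - 1) * σ ^ ((N:ℝ) - 1) * (σ + t) ^ (-(((N:ℝ) + 2*s))) *
            t ^ (-(2 * ((N:ℝ) - 2*s))))) := by ring
      _ ≤ 2 * (σ ^ ((N:ℝ) - 1 - 2 * ((N:ℝ) - 2*s) - c) * t ^ ((N:ℝ) - 1 + c - ((N:ℝ) + 2*s)) +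
            t ^ ((N:ℝ) - 1 - 2 * ((N:ℝ) - 2*s) - c) * σ ^ ((N:ℝ) - 1 + c - ((N:ℝ) + 2*s))) := by
          have := add_le_add hT1 hT2; linarith
      _ = 2 * (σ ^ e₁ * t ^ e₂ + σ ^ e₂ * t ^ e₁) := by rw [he₁def, he₂def]; ring
  have hint : IntegrableOn f (Set.Ioi (2 : ℝ) ×ˢ Set.Ioi (2 : ℝ)) volume :=
    hprod.mono' hmeas ((ae_restrict_iff' hbox).mpr (ae_of_all _ hbd))
  refine ⟨hint, ?_⟩
  rw [setIntegral_pos_iff_support_of_nonneg_ae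
    ((ae_restrict_iff' hbox).mpr (ae_of_all _ hnn)) hint]
  have hsub : Set.Ioo (3:ℝ) 4 ×ˢ Set.Ioo (5:ℝ) 6 ⊆
      Function.support f ∩ (Set.Ioi (2 : ℝ) ×ˢ Set.Ioi (2 : ℝ)) := by
    rintro ⟨σ, t⟩ ⟨hσm, htm⟩
    obtain ⟨h3, h4⟩ := hσm
    obtain ⟨h5, h6⟩ := htm
    have hσ0 : (0:ℝ) < σ := by linarith
    have ht0 : (0:ℝ) < t := by linarith
    have hXY : t ^ (-(((N:ℝ) - 2*s))) < σ ^ (-(((N:ℝ) - 2*s))) :=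
      Real.rpow_lt_rpow_of_neg hσ0 (by linarith) (by linarith)
    refine ⟨?_, mem_Ioi.mpr (by linarith), mem_Ioi.mpr (by linarith)⟩
    have hfpos : 0 < f (σ, t) := by
      rw [hfdef]
      exact mul_pos (mul_pos (mul_pos (Real.rpow_pos_of_pos hσ0 _)
        (Real.rpow_pos_of_pos ht0 _)) (Real.rpow_pos_of_pos (by linarith) _))
        (pow_pos (abs_pos.mpr (ne_of_gt (sub_pos.mpr hXY))) 2)
    exact Function.mem_support.mpr (ne_of_gt hfpos)
  refine lt_of_lt_of_le ?_ (measure_mono hsub)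
  have hvol : volume (Set.Ioo (3:ℝ) 4 ×ˢ Set.Ioo (5:ℝ) 6) = 1 := by
    rw [Measure.volume_eq_prod, Measure.prod_prod, Real.volume_Ioo, Real.volume_Ioo]
    norm_num
  rw [hvol]
  norm_num
end
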